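/- arXiv:2105.14047 — 8 statements merged into one kernel-verified Lean document; each statement's English description precedes it below -/
import Mathlib

section
/- If α ∈ ℤ[i] is odd, then there exists e ∈ {0,1,2,3} such that α ≡ i^e (mod γ³), i.e., γ³ divides α − i^e in ℤ[i]. -/
lemma gamma3_dvd (β : GaussianInt) (h1 : (4:ℤ) ∣ β.re - β.im) (h2 : (4:ℤ) ∣ β.re + β.im) :
    (⟨1, 1⟩ : GaussianInt) ^ 3 ∣ β := by
  obtain ⟨u, hu⟩ := h1
  obtain ⟨v, hv⟩ := h2
  refine ⟨⟨-u, -v⟩, ?_⟩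
  ext <;> simp [pow_succ, Zsqrtd.re_mul, Zsqrtd.im_mul] <;> omega

/-- If α ∈ ℤ[i] is odd, then there exists e ∈ {0,1,2,3} such that
α ≡ i^e (mod γ³), i.e., γ³ divides α − i^e in ℤ[i]. -/
theorem stmt_1 (α : GaussianInt) (hodd : ¬ ((⟨1, 1⟩ : GaussianInt) ∣ α)) :
    ∃ e : ℕ, e ≤ 3 ∧ (⟨1, 1⟩ : GaussianInt) ^ 3 ∣ α - (⟨0, 1⟩ : GaussianInt) ^ e := by
  set a := α.re with ha
  set b := α.im with hb
  have hab : ¬ (2 ∣ a + b) := by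
    rintro ⟨k, hk⟩
    exact hodd ⟨⟨k, k - a⟩, by ext <;> simp [Zsqrtd.re_mul, Zsqrtd.im_mul] <;> omega⟩
  have hcase : ((4:ℤ) ∣ (a-1) - b ∧ (4:ℤ) ∣ (a-1) + b) ∨
      ((4:ℤ) ∣ a - (b-1) ∧ (4:ℤ) ∣ a + (b-1)) ∨
      ((4:ℤ) ∣ (a+1) - b ∧ (4:ℤ) ∣ (a+1) + b) ∨
      ((4:ℤ) ∣ a - (b+1) ∧ (4:ℤ) ∣ a + (b+1)) := by omega
  rcases hcase with ⟨h1, h2⟩ | ⟨h1, h2⟩ | ⟨h1, h2⟩ | ⟨h1, h2⟩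
  · exact ⟨0, by norm_num, gamma3_dvd _ (by simpa using h1) (by simpa using h2)⟩
  · exact ⟨1, by norm_num, gamma3_dvd _ (by simpa using h1) (by simpa using h2)⟩
  · exact ⟨2, by norm_num, gamma3_dvd _ (by simpa [pow_succ, Zsqrtd.re_mul, Zsqrtd.im_mul] using h1) (by simpa [pow_succ, Zsqrtd.re_mul, Zsqrtd.im_mul] using h2)⟩
  · exact ⟨3, by norm_num, gamma3_dvd _ (by simpa [pow_succ, Zsqrtd.re_mul, Zsqrtd.im_mul] using h1) (by simpa [pow_succ, Zsqrtd.re_mul, Zsqrtd.im_mul] using h2)⟩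
end

section
/- Let v be a unit vector in ℤ[i]^n (i.e., v†v = 1) and let p ∈ {0, …, n−1}. Then there exists an n×n matrix G that is a product of one-level matrices of type i and two-level matrices of type X such that G·v = e_p, where e_p is the p-th standard basis vector. -/
open Matrix

noncomputable section

/-- The ring ℤ[i] of Gaussian integers, viewed as a subring of ℂ. -/
def Zi : Subring ℂ := Subring.closure {Complex.I}

/-- The ring ℤ[1/2, i]: the smallest subring of ℂ containing 1/2 and i. -/
def Dhi : Subring ℂ := Subring.closure {(1/2 : ℂ), Complex.I}

/-- The one-level matrix `z_{[j]}`: the n×n identity matrix with the (j,j) entry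
replaced by z. -/
def oneLevel (n : ℕ) (z : ℂ) (j : Fin n) : Matrix (Fin n) (Fin n) ℂ :=
  fun a b => if a = j ∧ b = j then z else if a = b then 1 else 0

/-- The two-level matrix `U_{[j,k]}`: the n×n identity matrix with the four entries
in rows and columns j, k replaced by the corresponding entries of the 2×2 matrix U. -/
def twoLevel (n : ℕ) (U : Matrix (Fin 2) (Fin 2) ℂ) (j k : Fin n) :
    Matrix (Fin n) (Fin n) ℂ :=
  fun a b =>
    if a = j then (if b = j then U 0 0 else if b = k then U 0 1 else 0)
    else if a = k then (if b = j then U 1 0 else if b = k then U 1 1 else 0)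
    else if a = b then 1 else 0

/-- The 2×2 matrix X. -/
def Xmat : Matrix (Fin 2) (Fin 2) ℂ := !![0, 1; 1, 0]

/-- The 2×2 matrix K = (1/(1+i))·[[1,1],[1,−1]]. -/
def Kmat : Matrix (Fin 2) (Fin 2) ℂ := (1 / (1 + Complex.I)) • !![1, 1; 1, -1]

/-- The conjugate transpose K† of K. -/
def Kdag : Matrix (Fin 2) (Fin 2) ℂ := Kmatᴴ

/-- The least denominator exponent of t: the least k with γ^k·t ∈ ℤ[i],
where γ = 1 + i. -/
def lde (t : ℂ) : ℕ := sInf {k : ℕ | (1 + Complex.I) ^ k * t ∈ Zi}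

/- ### Auxiliary material -/

/-- The subring of ℂ consisting of elements `a + b*I` with `a b : ℤ`. -/
def Smr : Subring ℂ where
  carrier := {z | ∃ a b : ℤ, z = (a : ℂ) + (b : ℂ) * Complex.I}
  zero_mem' := ⟨0, 0, by simp⟩
  one_mem' := ⟨1, 0, by simp⟩
  add_mem' := by
    rintro x y ⟨a, b, rfl⟩ ⟨c, d, rfl⟩
    exact ⟨a + c, b + d, by push_cast; ring⟩
  neg_mem' := by
    rintro x ⟨a, b, rfl⟩
    exact ⟨-a, -b, by push_cast; ring⟩
  mul_mem' := by
    rintro x y ⟨a, b, rfl⟩ ⟨c, d, rfl⟩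
    refine ⟨a * c - b * d, a * d + b * c, ?_⟩
    push_cast
    linear_combination ((b : ℂ) * d) * Complex.I_sq

lemma Zi_le_Smr : Zi ≤ Smr :=
  Subring.closure_le.mpr (by
    rintro z hz
    simp only [Set.mem_singleton_iff] at hz
    exact ⟨0, 1, by simp [hz]⟩)

lemma sq_add_sq_one (a b : ℤ) (h : a ^ 2 + b ^ 2 = 1) :
    (a = 1 ∧ b = 0) ∨ (a = -1 ∧ b = 0) ∨ (a = 0 ∧ b = 1) ∨ (a = 0 ∧ b = -1) := by
  have h1 : a ^ 2 ≤ 1 := by nlinarith [sq_nonneg b]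
  have h2 : b ^ 2 ≤ 1 := by nlinarith [sq_nonneg a]
  have ha1 : -1 ≤ a := by nlinarith
  have ha2 : a ≤ 1 := by nlinarith
  have hb1 : -1 ≤ b := by nlinarith
  have hb2 : b ≤ 1 := by nlinarith
  interval_cases a <;> interval_cases b <;> omega

lemma sq_add_sq_zero (a b : ℤ) (h : a ^ 2 + b ^ 2 = 0) : a = 0 ∧ b = 0 := by
  constructor <;> nlinarith [sq_nonneg a, sq_nonneg b]

lemma exists_pow_I (z : ℂ) (hz : z = 1 ∨ z = -1 ∨ z = Complex.I ∨ z = -Complex.I) :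
    ∃ m : ℕ, Complex.I ^ m * z = 1 := by
  rcases hz with rfl | rfl | rfl | rfl
  · exact ⟨0, by simp⟩
  · exact ⟨2, by simp [pow_succ, Complex.I_mul_I]⟩
  · exact ⟨3, by simp [pow_succ, Complex.I_mul_I]⟩
  · exact ⟨1, by simp [Complex.I_mul_I]⟩

lemma conj_mul_self' (a b : ℤ) :
    (starRingEnd ℂ) ((a : ℂ) + (b : ℂ) * Complex.I) * ((a : ℂ) + (b : ℂ) * Complex.I)
      = ((a ^ 2 + b ^ 2 : ℤ) : ℂ) := by
  simp only [map_add, _root_.map_mul, Complex.conj_I, map_intCast]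
  push_cast
  linear_combination (-(b : ℂ) ^ 2) * Complex.I_sq

lemma oneLevel_mulVec (n : ℕ) (z : ℂ) (j : Fin n) (w : Fin n → ℂ) :
    (oneLevel n z j).mulVec w = Function.update w j (z * w j) := by
  funext a
  simp only [mulVec, dotProduct, oneLevel]
  by_cases h : a = j
  · subst h
    rw [Finset.sum_eq_single a]
    · simp
    · intro b _ hb; simp [hb, Ne.symm hb]
    · simp
  · rw [Finset.sum_eq_single a]
    · simp [h, Function.update_of_ne h]
    · intro b _ hb; simp [h, Ne.symm hb]
    · simp

lemma pow_oneLevel_mulVec (n : ℕ) (j : Fin n) (w : Fin n → ℂ) (m : ℕ) :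
    ((oneLevel n Complex.I j) ^ m).mulVec w
      = Function.update w j (Complex.I ^ m * w j) := by
  induction m with
  | zero => simp [Function.update_eq_self]
  | succ m ih =>
      rw [pow_succ', ← mulVec_mulVec, ih, oneLevel_mulVec]
      rw [Function.update_self, Function.update_idem]
      ring_nf

lemma twoLevel_X_mulVec (n : ℕ) (j k : Fin n) (hjk : j ≠ k) (w : Fin n → ℂ) :
    (twoLevel n Xmat j k).mulVec w =
      fun a => if a = j then w k else if a = k then w j else w a := by
  funext a
  simp only [mulVec, dotProduct, twoLevel, Xmat]
  by_cases hj : a = j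
  · subst hj
    rw [Finset.sum_eq_single k]
    · simp [hjk, Ne.symm hjk]
    · intro b _ hb; simp [hb]
    · simp
  · by_cases hk : a = k
    · subst hk
      rw [Finset.sum_eq_single j]
      · simp [hj, hjk]
      · intro b _ hb; simp [hj, hb]
      · simp
    · rw [Finset.sum_eq_single a]
      · simp [hj, hk]
      · intro b _ hb; simp [hj, hk, Ne.symm hb]
      · simp

/-- For a unit vector v ∈ ℤ[i]^n and p, there is a product G of one-level
matrices of type i and two-level matrices of type X with G·v = e_p. -/
theorem stmt_4 (n : ℕ) (v : Fin n → ℂ) (hv : ∀ j, v j ∈ Zi)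
    (hunit : ∑ j, (starRingEnd ℂ) (v j) * v j = 1) (p : Fin n) :
    ∃ G ∈ Submonoid.closure {M : Matrix (Fin n) (Fin n) ℂ |
        (∃ j, M = oneLevel n Complex.I j) ∨
        (∃ j k, j < k ∧ M = twoLevel n Xmat j k)},
      G.mulVec v = Pi.single p 1 := by
  classical
  choose a b hab using fun j => Zi_le_Smr (hv j)
  set N : Fin n → ℤ := fun j => (a j) ^ 2 + (b j) ^ 2 with hN
  have hsum : ∑ j, N j = 1 := by
    have : ∑ j, ((N j : ℤ) : ℂ) = 1 := by
      rw [← hunit]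
      refine Finset.sum_congr rfl fun j _ => ?_
      rw [hab j, conj_mul_self']
    exact_mod_cast this
  have hnonneg : ∀ j, 0 ≤ N j := fun j => by positivity
  -- find the index q where N q = 1
  have hne : ∃ q ∈ Finset.univ, N q ≠ 0 := by
    by_contra h
    push_neg at h
    have : ∑ j, N j = 0 := Finset.sum_eq_zero fun j hj => h j hj
    omega
  obtain ⟨q, -, hq0⟩ := hne
  have herase : N q + ∑ j ∈ Finset.univ.erase q, N j = 1 := by
    rw [Finset.add_sum_erase _ _ (Finset.mem_univ q)]; exact hsum
  have herase_nonneg : 0 ≤ ∑ j ∈ Finset.univ.erase q, N j :=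
    Finset.sum_nonneg fun j _ => hnonneg j
  have hNq : N q = 1 := by have := hnonneg q; omega
  have herase0 : ∑ j ∈ Finset.univ.erase q, N j = 0 := by omega
  have hzero : ∀ j, j ≠ q → v j = 0 := by
    intro j hj
    have hj0 : N j = 0 := by
      have := (Finset.sum_eq_zero_iff_of_nonneg fun i _ => hnonneg i).mp herase0
      exact this j (Finset.mem_erase.mpr ⟨hj, Finset.mem_univ j⟩)
    obtain ⟨ha0, hb0⟩ := sq_add_sq_zero _ _ hj0
    rw [hab j, ha0, hb0]; simp
  have hvq : v q = 1 ∨ v q = -1 ∨ v q = Complex.I ∨ v q = -Complex.I := by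
    rcases sq_add_sq_one _ _ hNq with ⟨h1, h2⟩ | ⟨h1, h2⟩ | ⟨h1, h2⟩ | ⟨h1, h2⟩
    · left; rw [hab q, h1, h2]; push_cast; ring
    · right; left; rw [hab q, h1, h2]; push_cast; ring
    · right; right; left; rw [hab q, h1, h2]; push_cast; ring
    · right; right; right; rw [hab q, h1, h2]; push_cast; ring
  obtain ⟨m, hm⟩ := exists_pow_I _ hvq
  set A := (oneLevel n Complex.I q) ^ m with hA
  have hAmem : A ∈ Submonoid.closure {M : Matrix (Fin n) (Fin n) ℂ |
      (∃ j, M = oneLevel n Complex.I j) ∨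
      (∃ j k, j < k ∧ M = twoLevel n Xmat j k)} := by
    rw [hA]
    have hgen : oneLevel n Complex.I q ∈ {M : Matrix (Fin n) (Fin n) ℂ |
        (∃ j, M = oneLevel n Complex.I j) ∨
        (∃ j k, j < k ∧ M = twoLevel n Xmat j k)} := Or.inl ⟨q, rfl⟩
    exact Submonoid.pow_mem _ (Submonoid.subset_closure hgen) m
  have hAv : A.mulVec v = Function.update v q 1 := by
    rw [hA, pow_oneLevel_mulVec, hm]
  by_cases hpq : p = q
  · refine ⟨A, hAmem, ?_⟩
    rw [hAv, ← hpq]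
    funext x
    by_cases hx : x = p
    · subst hx; simp
    · rw [Function.update_of_ne hx, Pi.single_eq_of_ne hx, hzero x (hpq ▸ hx)]
  · -- need a swap
    rcases lt_or_gt_of_ne hpq with h | h
    · have hgen : twoLevel n Xmat p q ∈ {M : Matrix (Fin n) (Fin n) ℂ |
          (∃ j, M = oneLevel n Complex.I j) ∨
          (∃ j k, j < k ∧ M = twoLevel n Xmat j k)} := Or.inr ⟨p, q, h, rfl⟩
      refine ⟨twoLevel n Xmat p q * A,
        mul_mem (Submonoid.subset_closure hgen) hAmem, ?_⟩
      rw [← mulVec_mulVec, hAv, twoLevel_X_mulVec n p q hpq]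
      funext x
      by_cases hx : x = p
      · rw [if_pos hx, Function.update_self, hx, Pi.single_eq_same]
      · rw [if_neg hx, Pi.single_eq_of_ne hx]
        by_cases hx2 : x = q
        · rw [if_pos hx2, Function.update_of_ne hpq]
          exact hzero p hpq
        · rw [if_neg hx2, Function.update_of_ne hx2]
          exact hzero x hx2
    · have hqp : q ≠ p := Ne.symm hpq
      have hgen : twoLevel n Xmat q p ∈ {M : Matrix (Fin n) (Fin n) ℂ |
          (∃ j, M = oneLevel n Complex.I j) ∨
          (∃ j k, j < k ∧ M = twoLevel n Xmat j k)} := Or.inr ⟨q, p, h, rfl⟩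
      refine ⟨twoLevel n Xmat q p * A,
        mul_mem (Submonoid.subset_closure hgen) hAmem, ?_⟩
      rw [← mulVec_mulVec, hAv, twoLevel_X_mulVec n q p hqp]
      funext x
      by_cases hx : x = q
      · rw [if_pos hx, Function.update_of_ne hpq, hzero p hpq, hx, Pi.single_eq_of_ne hqp]
      · by_cases hx2 : x = p
        · rw [if_neg hx, if_pos hx2, Function.update_self, hx2, Pi.single_eq_same]
        · rw [if_neg hx, if_neg hx2, Function.update_of_ne hx, hzero x hx,
            Pi.single_eq_of_ne hx2]

end
end

section
/- Let v ∈ ℂ^n be a unit vector (v†v = 1) all of whose entries lie in ℤ[1/2,i], let k > 0 be the least denominator exponent of v, and let w = γ^k·v ∈ ℤ[i]^n. Then the number of indices j ∈ {0,…,n−1} such that w_j is odd is even. -/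
open Matrix

noncomputable section

lemma Zi_eq_range : Zi = (GaussianInt.toComplex).range := by
  apply le_antisymm
  · rw [Zi, Subring.closure_le]
    rintro x hx
    rw [Set.mem_singleton_iff] at hx
    subst hx
    exact ⟨⟨0, 1⟩, by simp [GaussianInt.toComplex_def']⟩
  · rintro x ⟨z, rfl⟩
    show GaussianInt.toComplex z ∈ Zi
    rw [GaussianInt.toComplex_def]
    exact Subring.add_mem _ (intCast_mem _ _)
      (Subring.mul_mem _ (intCast_mem _ _) (Subring.subset_closure rfl))

lemma gamma_dvd_iff (W : GaussianInt) :
    (⟨1, 1⟩ : GaussianInt) ∣ W ↔ ((W.re + W.im : ℤ) : ZMod 2) = 0 := by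
  constructor
  · rintro ⟨z, rfl⟩
    have h2 : ((⟨1,1⟩ : GaussianInt) * z).re + ((⟨1,1⟩ : GaussianInt) * z).im = 2 * z.re := by
      rw [Zsqrtd.re_mul, Zsqrtd.im_mul]; ring
    rw [h2]
    push_cast
    rw [show (2 : ZMod 2) = 0 by decide]
    ring
  · intro h
    rw [ZMod.intCast_zmod_eq_zero_iff_dvd] at h
    obtain ⟨c, hc⟩ := h
    refine ⟨⟨c, c - W.re⟩, ?_⟩
    ext <;> simp [Zsqrtd.re_mul, Zsqrtd.im_mul] <;> omega

lemma norm_mod2 (W : GaussianInt) :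
    ((W.norm : ℤ) : ZMod 2) = ((W.re + W.im : ℤ) : ZMod 2) := by
  have h : ∀ x : ZMod 2, x * x = x := by decide
  calc ((W.norm : ℤ) : ZMod 2) = (W.re : ZMod 2) * W.re + (W.im : ZMod 2) * W.im := by
        rw [Zsqrtd.norm_def]; push_cast; ring
    _ = _ := by rw [h, h]; push_cast; ring


open scoped Classical in
/-- If v is a unit vector with entries in ℤ[1/2,i] and least denominator
exponent k > 0, then w = γ^k·v has an even number of odd entries. -/
theorem stmt_5 (n : ℕ) (v : Fin n → ℂ) (hv : ∀ j, v j ∈ Dhi)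
    (hunit : ∑ j, (starRingEnd ℂ) (v j) * v j = 1) (k : ℕ) (hk : 0 < k)
    (hlde : sInf {m : ℕ | ∀ j, (1 + Complex.I) ^ m * v j ∈ Zi} = k) :
    Even (Finset.univ.filter (fun j : Fin n =>
        ¬ ∃ y ∈ Zi, (1 + Complex.I) ^ k * v j = (1 + Complex.I) * y)).card := by
  have hkmem : ∀ j, (1 + Complex.I) ^ k * v j ∈ Zi := by
    have hne : {m : ℕ | ∀ j, (1 + Complex.I) ^ m * v j ∈ Zi}.Nonempty := by
      by_contra h
      rw [Set.not_nonempty_iff_eq_empty] at h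
      rw [h, Nat.sInf_empty] at hlde
      omega
    have h := Nat.sInf_mem hne
    rwa [hlde] at h
  have hrange : ∀ j, ∃ z : GaussianInt,
      GaussianInt.toComplex z = (1 + Complex.I) ^ k * v j := by
    intro j
    have h := hkmem j
    rw [Zi_eq_range] at h
    exact h
  choose W hW using hrange
  have hgam : GaussianInt.toComplex ⟨1, 1⟩ = 1 + Complex.I := by
    simp [GaussianInt.toComplex_def']
  have hc : (starRingEnd ℂ) (1 + Complex.I) * (1 + Complex.I) = 2 := by
    rw [map_add, _root_.map_one, Complex.conj_I]
    ring_nf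
    rw [Complex.I_sq]
    ring
  have key : ∀ j, ((Zsqrtd.norm (W j) : ℤ) : ℂ)
      = 2 ^ k * ((starRingEnd ℂ) (v j) * v j) := by
    intro j
    have h1 : ((Zsqrtd.norm (W j) : ℤ) : ℂ)
        = GaussianInt.toComplex ((Zsqrtd.norm (W j) : ℤ) : GaussianInt) :=
      (map_intCast GaussianInt.toComplex _).symm
    rw [h1, Zsqrtd.norm_eq_mul_conj, _root_.map_mul, GaussianInt.toComplex_star, hW j]
    rw [_root_.map_mul, map_pow, ← hc, mul_pow]
    ring
  have hsumZ : ∑ j, Zsqrtd.norm (W j) = 2 ^ k := by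
    have : ((∑ j, Zsqrtd.norm (W j) : ℤ) : ℂ) = ((2 ^ k : ℤ) : ℂ) := by
      push_cast
      rw [Finset.sum_congr rfl (fun j _ => key j), ← Finset.mul_sum, hunit, mul_one]
    exact_mod_cast this
  have hmod : ((∑ j, Zsqrtd.norm (W j) : ℤ) : ZMod 2) = 0 := by
    rw [hsumZ]
    push_cast
    rw [show (2 : ZMod 2) = 0 by decide, zero_pow hk.ne']
  have hdvd : ∀ j, (∃ y ∈ Zi, (1 + Complex.I) ^ k * v j = (1 + Complex.I) * y)
      ↔ (⟨1, 1⟩ : GaussianInt) ∣ W j := by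
    intro j
    constructor
    · rintro ⟨y, hy, heq⟩
      rw [Zi_eq_range] at hy
      obtain ⟨z, rfl⟩ := hy
      refine ⟨z, ?_⟩
      apply GaussianInt.toComplex_injective
      rw [_root_.map_mul, hgam, hW j]
      exact heq
    · rintro ⟨z, hz⟩
      exact ⟨GaussianInt.toComplex z, by rw [Zi_eq_range]; exact ⟨z, rfl⟩,
        by rw [← hW j, hz, _root_.map_mul, hgam]⟩
  have hpred : ∀ j, (¬ ∃ y ∈ Zi, (1 + Complex.I) ^ k * v j = (1 + Complex.I) * y)
      ↔ (((Zsqrtd.norm (W j) : ℤ) : ZMod 2) ≠ 0) := by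
    intro j
    rw [norm_mod2, hdvd j, gamma_dvd_iff]
  have hone : ∀ x : ZMod 2, x ≠ 0 → x = 1 := by decide
  have hcard : ((Finset.univ.filter (fun j : Fin n =>
      ¬ ∃ y ∈ Zi, (1 + Complex.I) ^ k * v j = (1 + Complex.I) * y)).card : ZMod 2) = 0 := by
    rw [Finset.card_filter]
    push_cast
    have hterm : ∀ j ∈ Finset.univ, (if (¬ ∃ y ∈ Zi,
        (1 + Complex.I) ^ k * v j = (1 + Complex.I) * y) then (1 : ZMod 2) else 0)
        = ((Zsqrtd.norm (W j) : ℤ) : ZMod 2) := by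
      intro j _
      by_cases h : ¬ ∃ y ∈ Zi, (1 + Complex.I) ^ k * v j = (1 + Complex.I) * y
      · rw [if_pos h, hone _ ((hpred j).mp h)]
      · rw [if_neg h]
        have := (hpred j).not.mp h
        push_neg at this
        exact this.symm
    rw [Finset.sum_congr rfl hterm, ← Int.cast_sum, hmod]
  rw [even_iff_two_dvd]
  exact (ZMod.natCast_eq_zero_iff _ 2).mp hcard


end
end

section
/- Let v ∈ ℂ^n be a vector with all entries in ℤ[1/2,i], let 0 ≤ j < ℓ < n, and suppose lde(v_j) = lde(v_ℓ) = k > 0. Then there exists an exponent q ∈ {0,1} such that the vector v' = (K†)_{[j,ℓ]} · (i^q)_{[ℓ]} · v satisfies lde(v'_j) < k and lde(v'_ℓ) < k, and v'_m = v_m for all indices m ∉ {j, ℓ}. -/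
open Matrix

noncomputable section

lemma Zi_I : Complex.I ∈ Zi := Subring.subset_closure rfl

lemma mem_Zi_iff {t : ℂ} : t ∈ Zi ↔ ∃ x y : ℤ, t = (x : ℂ) + (y : ℂ) * Complex.I := by
  constructor
  · intro h
    induction h using Subring.closure_induction with
    | mem s hs => exact ⟨0, 1, by simp [Set.mem_singleton_iff.mp hs]⟩
    | zero => exact ⟨0, 0, by simp⟩
    | one => exact ⟨1, 0, by simp⟩
    | add x y hx hy ihx ihy =>
        obtain ⟨a, b, rfl⟩ := ihx
        obtain ⟨c, d, rfl⟩ := ihy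
        exact ⟨a + c, b + d, by push_cast; ring⟩
    | neg x hx ihx =>
        obtain ⟨a, b, rfl⟩ := ihx
        exact ⟨-a, -b, by push_cast; ring⟩
    | mul x y hx hy ihx ihy =>
        obtain ⟨a, b, rfl⟩ := ihx
        obtain ⟨c, d, rfl⟩ := ihy
        refine ⟨a * c - b * d, a * d + b * c, ?_⟩
        push_cast
        linear_combination ((b : ℂ) * d) * Complex.I_mul_I
  · rintro ⟨x, y, rfl⟩
    exact add_mem (intCast_mem Zi x) (mul_mem (intCast_mem Zi y) Zi_I)

lemma half_mem {t : ℂ} (X Y : ℤ) (h : t = 2*(X:ℂ) + 2*(Y:ℂ)*Complex.I) : t/2 ∈ Zi :=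
  mem_Zi_iff.mpr ⟨X, Y, by rw [h]; ring⟩

lemma odd_of_not_dvd {a : ℂ} {x y : ℤ} (hrep : a = (x:ℂ) + (y:ℂ) * Complex.I)
    (ha' : ∀ c ∈ Zi, (1 + Complex.I) * c ≠ a) : (x + y) % 2 = 1 := by
  rw [← Int.not_even_iff]
  intro hEv
  obtain ⟨p, hp⟩ := hEv
  refine ha' ((p:ℂ) + ((p - x : ℤ):ℂ) * Complex.I) (mem_Zi_iff.mpr ⟨p, p - x, rfl⟩) ?_
  have hy' : y = p + p - x := by omega
  have hyc : (y:ℂ) = (p:ℂ) + (p:ℂ) - (x:ℂ) := by exact_mod_cast hy'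
  rw [hrep]
  push_cast
  linear_combination ((p:ℂ)-(x:ℂ)) * Complex.I_mul_I - Complex.I * hyc

lemma key {a b : ℂ} (ha : a ∈ Zi) (hb : b ∈ Zi)
    (ha' : ∀ c ∈ Zi, (1 + Complex.I) * c ≠ a)
    (hb' : ∀ c ∈ Zi, (1 + Complex.I) * c ≠ b) :
    ∃ q : ℕ, q ≤ 1 ∧ (a + Complex.I ^ q * b) / 2 ∈ Zi ∧ (a - Complex.I ^ q * b) / 2 ∈ Zi := by
  obtain ⟨x, y, hxy⟩ := mem_Zi_iff.mp ha
  obtain ⟨u, w, huw⟩ := mem_Zi_iff.mp hb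
  have h1 := odd_of_not_dvd hxy ha'
  have h2 := odd_of_not_dvd huw hb'
  rcases Int.even_or_odd (x + u) with hE | hO
  · rw [Int.even_iff] at hE
    refine ⟨0, by norm_num, ?_, ?_⟩
    · obtain ⟨p, hp⟩ : Even (x + u) := by rw [Int.even_iff]; omega
      obtain ⟨r, hr⟩ : Even (y + w) := by rw [Int.even_iff]; omega
      refine half_mem p r ?_
      rw [hxy, huw]
      have hpc : (x:ℂ) + u = p + p := by exact_mod_cast hp
      have hrc : (y:ℂ) + w = r + r := by exact_mod_cast hr
      simp only [pow_zero, one_mul]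
      linear_combination hpc + Complex.I * hrc
    · obtain ⟨p, hp⟩ : Even (x - u) := by rw [Int.even_iff]; omega
      obtain ⟨r, hr⟩ : Even (y - w) := by rw [Int.even_iff]; omega
      refine half_mem p r ?_
      rw [hxy, huw]
      have hpc : (x:ℂ) - u = p + p := by exact_mod_cast hp
      have hrc : (y:ℂ) - w = r + r := by exact_mod_cast hr
      simp only [pow_zero, one_mul]
      linear_combination hpc + Complex.I * hrc
  · rw [Int.odd_iff] at hO
    refine ⟨1, le_rfl, ?_, ?_⟩
    · obtain ⟨p, hp⟩ : Even (x - w) := by rw [Int.even_iff]; omega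
      obtain ⟨r, hr⟩ : Even (y + u) := by rw [Int.even_iff]; omega
      refine half_mem p r ?_
      rw [hxy, huw]
      have hpc : (x:ℂ) - w = p + p := by exact_mod_cast hp
      have hrc : (y:ℂ) + u = r + r := by exact_mod_cast hr
      simp only [pow_one]
      linear_combination hpc + Complex.I * hrc + (w:ℂ) * Complex.I_mul_I
    · obtain ⟨p, hp⟩ : Even (x + w) := by rw [Int.even_iff]; omega
      obtain ⟨r, hr⟩ : Even (y - u) := by rw [Int.even_iff]; omega
      refine half_mem p r ?_
      rw [hxy, huw]
      have hpc : (x:ℂ) + w = p + p := by exact_mod_cast hp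
      have hrc : (y:ℂ) - u = r + r := by exact_mod_cast hr
      simp only [pow_one]
      linear_combination hpc + Complex.I * hrc - (w:ℂ) * Complex.I_mul_I

lemma Kdag_eq : Kdag = ((1 + Complex.I)/2) • !![1, 1; 1, -1] := by
  have h : (1 + -Complex.I)⁻¹ = (1 + Complex.I)/2 :=
    inv_eq_of_mul_eq_one_right (by linear_combination (-(1:ℂ)/2) * Complex.I_mul_I)
  ext i j
  fin_cases i <;> fin_cases j <;>
    simp [Kdag, Kmat, Matrix.conjTranspose_apply, Matrix.smul_apply, smul_eq_mul, h]

lemma oneLevel_mulVec_s6 {n : ℕ} (z : ℂ) (ℓ : Fin n) (v : Fin n → ℂ) (m : Fin n) :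
    (oneLevel n z ℓ).mulVec v m = if m = ℓ then z * v ℓ else v m := by
  have hrow : ∀ b, oneLevel n z ℓ m b = if m = b then (if m = ℓ then z else 1) else 0 := by
    intro b
    simp only [oneLevel]
    by_cases h1 : m = b <;> by_cases h2 : m = ℓ <;> simp_all
    intro hh; exact absurd hh.symm h1
  simp only [Matrix.mulVec, dotProduct]
  rw [Finset.sum_congr rfl (fun b _ => by rw [hrow])]
  simp only [ite_mul, zero_mul, Finset.sum_ite_eq, Finset.mem_univ, if_true]
  by_cases h : m = ℓ <;> simp [h]

lemma twoLevel_mulVec {n : ℕ} (U : Matrix (Fin 2) (Fin 2) ℂ) (j ℓ : Fin n) (hjl : j ≠ ℓ)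
    (v : Fin n → ℂ) (m : Fin n) :
    (twoLevel n U j ℓ).mulVec v m =
      if m = j then U 0 0 * v j + U 0 1 * v ℓ
      else if m = ℓ then U 1 0 * v j + U 1 1 * v ℓ
      else v m := by
  have hrow : ∀ b, twoLevel n U j ℓ m b =
      (if b = j then (if m = j then U 0 0 else if m = ℓ then U 1 0 else 0) else 0)
      + (if b = ℓ then (if m = j then U 0 1 else if m = ℓ then U 1 1 else 0) else 0)
      + (if m = b then (if m = j then 0 else if m = ℓ then 0 else 1) else 0) := by
    intro b
    simp only [twoLevel]
    by_cases h1 : m = j <;> by_cases h2 : m = ℓ <;> by_cases h3 : b = j <;> by_cases h4 : b = ℓ <;>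
      by_cases h5 : m = b <;> simp_all
  simp only [Matrix.mulVec, dotProduct]
  rw [Finset.sum_congr rfl (fun b _ => by rw [hrow, add_mul, add_mul])]
  rw [Finset.sum_add_distrib, Finset.sum_add_distrib]
  simp only [ite_mul, zero_mul, Finset.sum_ite_eq, Finset.sum_ite_eq', Finset.mem_univ, if_true]
  by_cases h1 : m = j <;> by_cases h2 : m = ℓ <;> simp_all

lemma lde_facts {t : ℂ} {k : ℕ} (hk : 0 < k) (h : lde t = k) :
    (1 + Complex.I) ^ k * t ∈ Zi ∧ (1 + Complex.I) ^ (k-1) * t ∉ Zi := by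
  simp only [lde] at h
  have hne : {m : ℕ | (1 + Complex.I) ^ m * t ∈ Zi}.Nonempty := by
    by_contra hc
    rw [Set.not_nonempty_iff_eq_empty] at hc
    rw [hc, Nat.sInf_empty] at h
    omega
  constructor
  · have h0 := Nat.sInf_mem hne
    rwa [h] at h0
  · have hlt : k - 1 < sInf {m : ℕ | (1 + Complex.I) ^ m * t ∈ Zi} := by rw [h]; omega
    exact Nat.notMem_of_lt_sInf hlt

/-- Row operation: if lde(v_j) = lde(v_ℓ) = k > 0 then there is
q ∈ {0,1} such that v' = (K†)_{[j,ℓ]}·(i^q)_{[ℓ]}·v has lde(v'_j), lde(v'_ℓ) < k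
and agrees with v elsewhere. -/
theorem stmt_6 (n : ℕ) (v : Fin n → ℂ) (hv : ∀ m, v m ∈ Dhi)
    (j ℓ : Fin n) (hjl : j < ℓ) (k : ℕ) (hk : 0 < k)
    (hj : lde (v j) = k) (hl : lde (v ℓ) = k) :
    ∃ q : ℕ, q ≤ 1 ∧
      ∀ v' : Fin n → ℂ,
        v' = (twoLevel n Kdag j ℓ * oneLevel n (Complex.I ^ q) ℓ).mulVec v →
        lde (v' j) < k ∧ lde (v' ℓ) < k ∧ ∀ m : Fin n, m ≠ j → m ≠ ℓ → v' m = v m := by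
  have hγ : (1 + Complex.I) ≠ 0 := fun h => by simpa using congrArg Complex.im h
  have hjl' : j ≠ ℓ := ne_of_lt hjl
  obtain ⟨haS, haN⟩ := lde_facts hk hj
  obtain ⟨hbS, hbN⟩ := lde_facts hk hl
  have hpow : (1 + Complex.I) ^ k = (1 + Complex.I) ^ (k-1) * (1 + Complex.I) := by
    rw [← pow_succ]; congr 1; omega
  have ha' : ∀ c ∈ Zi, (1 + Complex.I) * c ≠ (1 + Complex.I) ^ k * v j := by
    intro c hc heq
    apply haN
    have : (1 + Complex.I) ^ (k-1) * v j = c := by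
      apply mul_left_cancel₀ hγ
      rw [heq, hpow]; ring
    rwa [this]
  have hb' : ∀ c ∈ Zi, (1 + Complex.I) * c ≠ (1 + Complex.I) ^ k * v ℓ := by
    intro c hc heq
    apply hbN
    have : (1 + Complex.I) ^ (k-1) * v ℓ = c := by
      apply mul_left_cancel₀ hγ
      rw [heq, hpow]; ring
    rwa [this]
  obtain ⟨q, hq, hc1, hc2⟩ := key haS hbS ha' hb'
  refine ⟨q, hq, ?_⟩
  intro v' hv'
  have hw : ∀ m, v' m =
      (twoLevel n Kdag j ℓ).mulVec ((oneLevel n (Complex.I ^ q) ℓ).mulVec v) m := by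
    intro m; rw [hv', ← Matrix.mulVec_mulVec]
  have hwv : ∀ m, (oneLevel n (Complex.I ^ q) ℓ).mulVec v m =
      if m = ℓ then Complex.I ^ q * v ℓ else v m := oneLevel_mulVec_s6 _ _ _
  have hK : ∀ a b : Fin 2, Kdag a b = ((1 + Complex.I)/2) * !![(1:ℂ), 1; 1, -1] a b := by
    intro a b; rw [Kdag_eq]; rfl
  have hvj : v' j = (1 + Complex.I)/2 * (v j + Complex.I ^ q * v ℓ) := by
    rw [hw j, twoLevel_mulVec _ _ _ hjl', if_pos rfl, hwv j, hwv ℓ, if_neg hjl', if_pos rfl,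
      hK 0 0, hK 0 1]
    simp [Matrix.cons_val_zero, Matrix.cons_val_one]
    ring
  have hvl : v' ℓ = (1 + Complex.I)/2 * (v j - Complex.I ^ q * v ℓ) := by
    rw [hw ℓ, twoLevel_mulVec _ _ _ hjl', if_neg (Ne.symm hjl'), if_pos rfl, hwv j, hwv ℓ,
      if_neg hjl', if_pos rfl, hK 1 0, hK 1 1]
    simp [Matrix.cons_val_zero, Matrix.cons_val_one]
    ring
  refine ⟨?_, ?_, ?_⟩
  · have hmem : (1 + Complex.I) ^ (k-1) * v' j ∈ Zi := by
      have heq : (1 + Complex.I) ^ (k-1) * v' j =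
          ((1 + Complex.I) ^ k * v j + Complex.I ^ q * ((1 + Complex.I) ^ k * v ℓ)) / 2 := by
        rw [hvj, hpow]; ring
      rw [heq]; exact hc1
    simp only [lde]
    exact lt_of_le_of_lt (Nat.sInf_le hmem) (by omega)
  · have hmem : (1 + Complex.I) ^ (k-1) * v' ℓ ∈ Zi := by
      have heq : (1 + Complex.I) ^ (k-1) * v' ℓ =
          ((1 + Complex.I) ^ k * v j - Complex.I ^ q * ((1 + Complex.I) ^ k * v ℓ)) / 2 := by
        rw [hvl, hpow]; ring
      rw [heq]; exact hc2
    simp only [lde]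
    exact lt_of_le_of_lt (Nat.sInf_le hmem) (by omega)
  · intro m hm1 hm2
    rw [hw m, twoLevel_mulVec _ _ _ hjl', if_neg hm1, if_neg hm2, hwv m, if_neg hm2]

end
end

section
/- Call the generators X_{[j,j+1]} (for 0 ≤ j < n−1), K_{[0,1]}, and i_{[0]} the basic generators. Then every generator g ∈ 𝒢 is ≈_R-equivalent to a word consisting only of basic generators. In particular, the following equivalences hold: i_{[j]} ≈_R X_{[0,j]}·i_{[0]}·X_{[0,j]} for j ≥ 1; K_{[j,ℓ]} ≈_R X_{[0,j]}·K_{[0,ℓ]}·X_{[0,j]} for 0 < j < ℓ; K_{[0,ℓ]} ≈_R X_{[1,ℓ]}·K_{[0,1]}·X_{[1,ℓ]} for ℓ > 1; and X_{[j,ℓ]} ≈_R X_{[j,j+1]}·X_{[j+1,ℓ]}·X_{[j,j+1]} for ℓ > j+1. -/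
open Matrix

noncomputable section

/-- The generators 𝒢 of U_n(ℤ[1/2,i]): `igen j` stands for i_{[j]},
`xgen j k` for X_{[j,k]} and `kgen j k` for K_{[j,k]}. -/
inductive Gen (n : ℕ) : Type
  | igen (j : ℕ) (hj : j < n)
  | xgen (j k : ℕ) (hjk : j < k) (hk : k < n)
  | kgen (j k : ℕ) (hjk : j < k) (hk : k < n)

/-- Interpretation of a generator as a matrix. -/
def interp {n : ℕ} : Gen n → Matrix (Fin n) (Fin n) ℂ
  | .igen j hj => oneLevel n Complex.I ⟨j, hj⟩
  | .xgen j k hjk hk => twoLevel n Xmat ⟨j, hjk.trans hk⟩ ⟨k, hk⟩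
  | .kgen j k hjk hk => twoLevel n Kmat ⟨j, hjk.trans hk⟩ ⟨k, hk⟩

/-- The semantics ⟦w⟧ of a word w ∈ 𝒢*: the product of the interpretations of its
letters (the empty word denoting the identity matrix). -/
def sem {n : ℕ} : FreeMonoid (Gen n) →* Matrix (Fin n) (Fin n) ℂ :=
  FreeMonoid.lift interp

open FreeMonoid in
/-- The relations R of Figure 1. -/
inductive GRel (n : ℕ) : FreeMonoid (Gen n) → FreeMonoid (Gen n) → Prop
  | r1 (j : ℕ) (hj : j < n) :
      GRel n (of (Gen.igen j hj) ^ 4) 1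
  | r2 (j k : ℕ) (hjk : j < k) (hk : k < n) :
      GRel n (of (Gen.xgen j k hjk hk) ^ 2) 1
  | r3 (j k : ℕ) (hjk : j < k) (hk : k < n) :
      GRel n (of (Gen.kgen j k hjk hk) ^ 8) 1
  | r4 (j k : ℕ) (hj : j < n) (hk : k < n) (hne : j ≠ k) :
      GRel n (of (Gen.igen j hj) * of (Gen.igen k hk))
            (of (Gen.igen k hk) * of (Gen.igen j hj))
  | r5 (j k ℓ : ℕ) (hj : j < n) (hkl : k < ℓ) (hl : ℓ < n) (h1 : j ≠ k) (h2 : j ≠ ℓ) :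
      GRel n (of (Gen.igen j hj) * of (Gen.xgen k ℓ hkl hl))
            (of (Gen.xgen k ℓ hkl hl) * of (Gen.igen j hj))
  | r6 (j k ℓ : ℕ) (hj : j < n) (hkl : k < ℓ) (hl : ℓ < n) (h1 : j ≠ k) (h2 : j ≠ ℓ) :
      GRel n (of (Gen.igen j hj) * of (Gen.kgen k ℓ hkl hl))
            (of (Gen.kgen k ℓ hkl hl) * of (Gen.igen j hj))
  | r7 (j k ℓ m : ℕ) (hjk : j < k) (hk : k < n) (hlm : ℓ < m) (hm : m < n)
      (h1 : j ≠ ℓ) (h2 : j ≠ m) (h3 : k ≠ ℓ) (h4 : k ≠ m) :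
      GRel n (of (Gen.xgen j k hjk hk) * of (Gen.xgen ℓ m hlm hm))
            (of (Gen.xgen ℓ m hlm hm) * of (Gen.xgen j k hjk hk))
  | r8 (j k ℓ m : ℕ) (hjk : j < k) (hk : k < n) (hlm : ℓ < m) (hm : m < n)
      (h1 : j ≠ ℓ) (h2 : j ≠ m) (h3 : k ≠ ℓ) (h4 : k ≠ m) :
      GRel n (of (Gen.xgen j k hjk hk) * of (Gen.kgen ℓ m hlm hm))
            (of (Gen.kgen ℓ m hlm hm) * of (Gen.xgen j k hjk hk))
  | r9 (j k ℓ m : ℕ) (hjk : j < k) (hk : k < n) (hlm : ℓ < m) (hm : m < n)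
      (h1 : j ≠ ℓ) (h2 : j ≠ m) (h3 : k ≠ ℓ) (h4 : k ≠ m) :
      GRel n (of (Gen.kgen j k hjk hk) * of (Gen.kgen ℓ m hlm hm))
            (of (Gen.kgen ℓ m hlm hm) * of (Gen.kgen j k hjk hk))
  | r10 (j k : ℕ) (hjk : j < k) (hk : k < n) :
      GRel n (of (Gen.igen k hk) * of (Gen.xgen j k hjk hk))
            (of (Gen.xgen j k hjk hk) * of (Gen.igen j (hjk.trans hk)))
  | r11 (j k ℓ : ℕ) (hjk : j < k) (hkl : k < ℓ) (hl : ℓ < n) :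
      GRel n (of (Gen.xgen k ℓ hkl hl) * of (Gen.xgen j k hjk (hkl.trans hl)))
            (of (Gen.xgen j k hjk (hkl.trans hl)) * of (Gen.xgen j ℓ (hjk.trans hkl) hl))
  | r11' (j k ℓ : ℕ) (hjk : j < k) (hkl : k < ℓ) (hl : ℓ < n) :
      GRel n (of (Gen.xgen j ℓ (hjk.trans hkl) hl) * of (Gen.xgen k ℓ hkl hl))
            (of (Gen.xgen k ℓ hkl hl) * of (Gen.xgen j k hjk (hkl.trans hl)))
  | r12 (j k ℓ : ℕ) (hjk : j < k) (hkl : k < ℓ) (hl : ℓ < n) :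
      GRel n (of (Gen.kgen k ℓ hkl hl) * of (Gen.xgen j k hjk (hkl.trans hl)))
            (of (Gen.xgen j k hjk (hkl.trans hl)) * of (Gen.kgen j ℓ (hjk.trans hkl) hl))
  | r12' (j k ℓ : ℕ) (hjk : j < k) (hkl : k < ℓ) (hl : ℓ < n) :
      GRel n (of (Gen.kgen j ℓ (hjk.trans hkl) hl) * of (Gen.xgen k ℓ hkl hl))
            (of (Gen.xgen k ℓ hkl hl) * of (Gen.kgen j k hjk (hkl.trans hl)))
  | r13 (j k : ℕ) (hjk : j < k) (hk : k < n) :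
      GRel n (of (Gen.kgen j k hjk hk) * of (Gen.igen k hk) ^ 2)
            (of (Gen.xgen j k hjk hk) * of (Gen.kgen j k hjk hk))
  | r14 (j k : ℕ) (hjk : j < k) (hk : k < n) :
      GRel n (of (Gen.kgen j k hjk hk) * of (Gen.igen k hk) ^ 3)
            (of (Gen.igen k hk) * of (Gen.kgen j k hjk hk) *
             of (Gen.igen k hk) * of (Gen.kgen j k hjk hk))
  | r15 (j k : ℕ) (hjk : j < k) (hk : k < n) :
      GRel n (of (Gen.kgen j k hjk hk) * of (Gen.igen j (hjk.trans hk)) * of (Gen.igen k hk))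
            (of (Gen.igen j (hjk.trans hk)) * of (Gen.igen k hk) * of (Gen.kgen j k hjk hk))
  | r16 (j k : ℕ) (hjk : j < k) (hk : k < n) :
      GRel n (of (Gen.kgen j k hjk hk) ^ 2 * of (Gen.igen j (hjk.trans hk)) * of (Gen.igen k hk)) 1
  | r17 (j k ℓ m : ℕ) (hjk : j < k) (hlm : ℓ < m) (hjl : j < ℓ) (hkm : k < m)
      (hm : m < n) (hkl : k ≠ ℓ) :
      GRel n (of (Gen.kgen j k hjk (hkm.trans hm)) * of (Gen.kgen ℓ m hlm hm) *
             of (Gen.kgen j ℓ hjl (hlm.trans hm)) * of (Gen.kgen k m hkm hm))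
            (of (Gen.kgen j ℓ hjl (hlm.trans hm)) * of (Gen.kgen k m hkm hm) *
             of (Gen.kgen j k hjk (hkm.trans hm)) * of (Gen.kgen ℓ m hlm hm))

/-- A generator is basic if it is X_{[j,j+1]}, K_{[0,1]}, or i_{[0]}. -/
def IsBasic {n : ℕ} : Gen n → Prop
  | .igen j _ => j = 0
  | .xgen j k _ _ => k = j + 1
  | .kgen j k _ _ => j = 0 ∧ k = 1

section Aux

variable {n : ℕ}

open FreeMonoid

private lemma conj_right {a b d : FreeMonoid (Gen n)}
    (h : conGen (GRel n) (a * b) (b * d))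
    (hb : conGen (GRel n) (b * b) 1) :
    conGen (GRel n) a (b * d * b) := by
  have h1 : conGen (GRel n) a (a * (b * b)) := by
    have := (conGen (GRel n)).mul ((conGen (GRel n)).refl a) hb.symm
    simpa using this
  have h2 : conGen (GRel n) (a * (b * b)) ((b * d) * b) := by
    rw [← mul_assoc]
    exact (conGen (GRel n)).mul h ((conGen (GRel n)).refl b)
  exact h1.trans h2

private lemma conj_left {a b d : FreeMonoid (Gen n)}
    (h : conGen (GRel n) (b * a) (d * b))
    (hb : conGen (GRel n) (b * b) 1) :
    conGen (GRel n) a (b * d * b) := by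
  have h1 : conGen (GRel n) a ((b * b) * a) := by
    have := (conGen (GRel n)).mul hb.symm ((conGen (GRel n)).refl a)
    simpa using this
  have h2 : conGen (GRel n) ((b * b) * a) (b * (d * b)) := by
    rw [mul_assoc]
    exact (conGen (GRel n)).mul ((conGen (GRel n)).refl b) h
  have h3 : conGen (GRel n) a (b * (d * b)) := h1.trans h2
  rwa [← mul_assoc] at h3

private lemma xsq (j k : ℕ) (hjk : j < k) (hk : k < n) :
    conGen (GRel n) (of (Gen.xgen j k hjk hk) * of (Gen.xgen j k hjk hk)) 1 := by
  have : conGen (GRel n) (of (Gen.xgen j k hjk hk) ^ 2) 1 :=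
    ConGen.Rel.of _ _ (GRel.r2 j k hjk hk)
  simpa [sq] using this

private lemma ilem (j : ℕ) (h1 : 1 ≤ j) (hj : j < n) :
    conGen (GRel n) (of (Gen.igen j hj))
      (of (Gen.xgen 0 j h1 hj) * of (Gen.igen 0 (Nat.lt_of_le_of_lt (Nat.zero_le j) hj)) *
       of (Gen.xgen 0 j h1 hj)) :=
  conj_right (ConGen.Rel.of _ _ (GRel.r10 0 j h1 hj)) (xsq 0 j h1 hj)

private lemma klem (j ℓ : ℕ) (h0j : 0 < j) (hjl : j < ℓ) (hl : ℓ < n) :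
    conGen (GRel n) (of (Gen.kgen j ℓ hjl hl))
      (of (Gen.xgen 0 j h0j (hjl.trans hl)) * of (Gen.kgen 0 ℓ (h0j.trans hjl) hl) *
       of (Gen.xgen 0 j h0j (hjl.trans hl))) :=
  conj_right (ConGen.Rel.of _ _ (GRel.r12 0 j ℓ h0j hjl hl)) (xsq 0 j h0j (hjl.trans hl))

private lemma klem0 (ℓ : ℕ) (h1l : 1 < ℓ) (hl : ℓ < n) :
    conGen (GRel n) (of (Gen.kgen 0 ℓ (Nat.lt_of_lt_of_le Nat.zero_lt_one h1l.le) hl))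
      (of (Gen.xgen 1 ℓ h1l hl) * of (Gen.kgen 0 1 Nat.zero_lt_one (h1l.trans hl)) *
       of (Gen.xgen 1 ℓ h1l hl)) :=
  conj_right (ConGen.Rel.of _ _ (GRel.r12' 0 1 ℓ Nat.zero_lt_one h1l hl)) (xsq 1 ℓ h1l hl)

private lemma xdecomp (j ℓ : ℕ) (hj1l : j + 1 < ℓ) (hl : ℓ < n) :
    conGen (GRel n) (of (Gen.xgen j ℓ ((Nat.lt_succ_self j).trans hj1l) hl))
      (of (Gen.xgen j (j + 1) (Nat.lt_succ_self j) (hj1l.trans hl)) *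
       of (Gen.xgen (j + 1) ℓ hj1l hl) *
       of (Gen.xgen j (j + 1) (Nat.lt_succ_self j) (hj1l.trans hl))) :=
  conj_left (ConGen.Rel.of _ _ (GRel.r11 j (j + 1) ℓ (Nat.lt_succ_self j) hj1l hl)).symm
    (xsq j (j + 1) (Nat.lt_succ_self j) (hj1l.trans hl))

private lemma x_basic : ∀ (d j ℓ : ℕ), ℓ = j + d + 1 → ∀ (hjl : j < ℓ) (hl : ℓ < n),
    ∃ w : FreeMonoid (Gen n), (∀ a ∈ FreeMonoid.toList w, IsBasic a) ∧
      conGen (GRel n) (of (Gen.xgen j ℓ hjl hl)) w := by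
  intro d
  induction d with
  | zero =>
    intro j ℓ he hjl hl
    refine ⟨of (Gen.xgen j ℓ hjl hl), ?_, (conGen (GRel n)).refl _⟩
    intro a ha
    simp only [FreeMonoid.toList_of, List.mem_singleton] at ha
    subst ha
    simpa [IsBasic] using he
  | succ d ih =>
    intro j ℓ he hjl hl
    have hj1l : j + 1 < ℓ := by omega
    obtain ⟨w, hw, hcw⟩ := ih (j + 1) ℓ (by omega) hj1l hl
    have hfirst := xdecomp (n := n) j ℓ hj1l hl
    refine ⟨of (Gen.xgen j (j + 1) (Nat.lt_succ_self j) (hj1l.trans hl)) * w *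
      of (Gen.xgen j (j + 1) (Nat.lt_succ_self j) (hj1l.trans hl)), ?_, ?_⟩
    · intro a ha
      simp only [FreeMonoid.toList_mul, FreeMonoid.toList_of, List.mem_append,
        List.mem_singleton] at ha
      rcases ha with (ha | ha) | ha
      · subst ha; simp [IsBasic]
      · exact hw a ha
      · subst ha; simp [IsBasic]
    · refine hfirst.trans ?_
      exact (conGen (GRel n)).mul ((conGen (GRel n)).mul ((conGen (GRel n)).refl _) hcw)
        ((conGen (GRel n)).refl _)

private lemma k0_basic (ℓ : ℕ) (h0l : 0 < ℓ) (hl : ℓ < n) :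
    ∃ w : FreeMonoid (Gen n), (∀ a ∈ FreeMonoid.toList w, IsBasic a) ∧
      conGen (GRel n) (of (Gen.kgen 0 ℓ h0l hl)) w := by
  rcases eq_or_lt_of_le (show 1 ≤ ℓ from h0l) with h | h1l
  · refine ⟨of (Gen.kgen 0 ℓ h0l hl), ?_, (conGen (GRel n)).refl _⟩
    intro a ha
    simp only [FreeMonoid.toList_of, List.mem_singleton] at ha
    subst ha
    exact ⟨rfl, h.symm⟩
  · obtain ⟨w, hw, hcw⟩ := x_basic (n := n) (ℓ - 2) 1 ℓ (by omega) h1l hl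
    have hfirst := klem0 (n := n) ℓ h1l hl
    refine ⟨w * of (Gen.kgen 0 1 Nat.zero_lt_one (h1l.trans hl)) * w, ?_, ?_⟩
    · intro a ha
      simp only [FreeMonoid.toList_mul, FreeMonoid.toList_of, List.mem_append,
        List.mem_singleton] at ha
      rcases ha with (ha | ha) | ha
      · exact hw a ha
      · subst ha; exact ⟨rfl, rfl⟩
      · exact hw a ha
    · exact hfirst.trans ((conGen (GRel n)).mul
        ((conGen (GRel n)).mul hcw ((conGen (GRel n)).refl _)) hcw)

end Aux

open FreeMonoid in
/-- every generator is ≈_R-equivalent to a word of basic generators;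
in particular the four listed equivalences hold. -/
theorem stmt_15 (n : ℕ) :
    (∀ g : Gen n, ∃ w : FreeMonoid (Gen n),
      (∀ a ∈ FreeMonoid.toList w, IsBasic a) ∧ conGen (GRel n) (of g) w) ∧
    (∀ (j : ℕ) (h1 : 1 ≤ j) (hj : j < n),
      conGen (GRel n) (of (Gen.igen j hj))
        (of (Gen.xgen 0 j h1 hj) * of (Gen.igen 0 (Nat.lt_of_le_of_lt (Nat.zero_le j) hj)) *
         of (Gen.xgen 0 j h1 hj))) ∧
    (∀ (j ℓ : ℕ) (h0j : 0 < j) (hjl : j < ℓ) (hl : ℓ < n),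
      conGen (GRel n) (of (Gen.kgen j ℓ hjl hl))
        (of (Gen.xgen 0 j h0j (hjl.trans hl)) * of (Gen.kgen 0 ℓ (h0j.trans hjl) hl) *
         of (Gen.xgen 0 j h0j (hjl.trans hl)))) ∧
    (∀ (ℓ : ℕ) (h1l : 1 < ℓ) (hl : ℓ < n),
      conGen (GRel n) (of (Gen.kgen 0 ℓ (Nat.lt_of_lt_of_le Nat.zero_lt_one h1l.le) hl))
        (of (Gen.xgen 1 ℓ h1l hl) * of (Gen.kgen 0 1 Nat.zero_lt_one (h1l.trans hl)) *
         of (Gen.xgen 1 ℓ h1l hl))) ∧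
    (∀ (j ℓ : ℕ) (hj1l : j + 1 < ℓ) (hl : ℓ < n),
      conGen (GRel n) (of (Gen.xgen j ℓ ((Nat.lt_succ_self j).trans hj1l) hl))
        (of (Gen.xgen j (j + 1) (Nat.lt_succ_self j) (hj1l.trans hl)) *
         of (Gen.xgen (j + 1) ℓ hj1l hl) *
         of (Gen.xgen j (j + 1) (Nat.lt_succ_self j) (hj1l.trans hl)))) := by
  refine ⟨?_, fun j h1 hj => ilem j h1 hj, fun j ℓ h0j hjl hl => klem j ℓ h0j hjl hl,
    fun ℓ h1l hl => klem0 ℓ h1l hl, fun j ℓ hj1l hl => xdecomp j ℓ hj1l hl⟩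
  intro g
  cases g with
  | igen j hj =>
    rcases Nat.eq_zero_or_pos j with h | h
    · subst h
      exact ⟨of (Gen.igen 0 hj), by
        intro a ha
        simp only [FreeMonoid.toList_of, List.mem_singleton] at ha
        subst ha; exact rfl, (conGen (GRel n)).refl _⟩
    · obtain ⟨w, hw, hcw⟩ := x_basic (n := n) (j - 1) 0 j (by omega) h hj
      refine ⟨w * of (Gen.igen 0 (Nat.lt_of_le_of_lt (Nat.zero_le j) hj)) * w, ?_, ?_⟩
      · intro a ha
        simp only [FreeMonoid.toList_mul, FreeMonoid.toList_of, List.mem_append,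
          List.mem_singleton] at ha
        rcases ha with (ha | ha) | ha
        · exact hw a ha
        · subst ha; exact rfl
        · exact hw a ha
      · exact (ilem j h hj).trans ((conGen (GRel n)).mul
          ((conGen (GRel n)).mul hcw ((conGen (GRel n)).refl _)) hcw)
  | xgen j k hjk hk =>
    exact x_basic (n := n) (k - j - 1) j k (by omega) hjk hk
  | kgen j ℓ hjl hl =>
    rcases Nat.eq_zero_or_pos j with h | h
    · subst h
      exact k0_basic ℓ hjl hl
    · obtain ⟨w, hw, hcw⟩ := x_basic (n := n) (j - 1) 0 j (by omega) h (hjl.trans hl)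
      obtain ⟨w', hw', hcw'⟩ := k0_basic (n := n) ℓ (h.trans hjl) hl
      refine ⟨w * w' * w, ?_, ?_⟩
      · intro a ha
        simp only [FreeMonoid.toList_mul, List.mem_append] at ha
        rcases ha with (ha | ha) | ha
        · exact hw a ha
        · exact hw' a ha
        · exact hw a ha
      · exact (klem j ℓ h hjl hl).trans ((conGen (GRel n)).mul
          ((conGen (GRel n)).mul hcw hcw') hcw)

end
end

section
/- For all indices 0 ≤ j < ℓ < n, the following relational equivalence is a consequence of R: K†_{[j,ℓ]}·i_{[j]} ≈_R i_{[j]}·i_{[ℓ]}·X_{[j,ℓ]}·K†_{[j,ℓ]}·i_{[ℓ]}, where K†_{[j,ℓ]} abbreviates the word K_{[j,ℓ]}⁷. -/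
open Matrix

noncomputable section

lemma derive_aux {M : Type*} [Monoid M] (A I X K : M)
    (hI4 : I^4 = 1) (hA4 : A^4 = 1) (hX2 : X^2 = 1)
    (hIX : I*X = X*A) (h13 : K*I^2 = X*K) (h15 : K*A*I = A*I*K)
    (h16 : K^2*A*I = 1) (hAI : A*I = I*A) :
    K^7*A = A*I*X*K^7*I := by
  have hI4' : ∀ t : M, I*(I*(I*(I*t))) = t := fun t => by
    simpa [mul_assoc, pow_succ] using congrArg (· * t) hI4
  have hA4' : ∀ t : M, A*(A*(A*(A*t))) = t := fun t => by
    simpa [mul_assoc, pow_succ] using congrArg (· * t) hA4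
  have hX2' : ∀ t : M, X*(X*t) = t := fun t => by
    simpa [mul_assoc, pow_succ] using congrArg (· * t) hX2
  have hXK' : ∀ t : M, X*(K*t) = K*(I*(I*t)) := fun t => by
    simpa [mul_assoc, pow_succ] using (congrArg (· * t) h13).symm
  have h15' : ∀ t : M, K*(A*(I*t)) = A*(I*(K*t)) := fun t => by
    simpa [mul_assoc] using congrArg (· * t) h15
  have h16' : ∀ t : M, K*(K*(A*(I*t))) = t := fun t => by
    simpa [mul_assoc, pow_succ] using congrArg (· * t) h16
  have hIA' : ∀ t : M, I*(A*t) = A*(I*t) := fun t => by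
    simpa [mul_assoc] using (congrArg (· * t) hAI).symm
  have hIX' : ∀ t : M, I*(X*t) = X*(A*t) := fun t => by
    simpa [mul_assoc] using congrArg (· * t) hIX
  have hXI' : ∀ t : M, X*(I*t) = A*(X*t) := fun t => by
    conv_lhs => rw [← hX2' t, hIX', hX2']
  have hI4e : I*(I*(I*I)) = 1 := by
    simpa [pow_succ, mul_assoc] using hI4
  have hK2' : ∀ t : M, K*(K*t) = I*(I*(I*(A*(A*(A*t))))) := fun t => by
    conv_lhs => rw [show t = A*(I*(I*(I*(I*(A*(A*(A*t))))))) from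
      (by rw [hI4', hA4'] : A*(I*(I*(I*(I*(A*(A*(A*t))))))) = t).symm]
    rw [h16']
  have hK6' : ∀ t : M, K*(K*(K*(K*(K*(K*t))))) = A*(I*t) := fun t => by
    rw [hK2', hK2', hK2']
    simp only [hIA']
    rw [hA4', hA4', hI4', hI4']
  have hKA : K*A = A*(I*(K*(I*(I*I)))) := by
    conv_lhs => rw [show A = A*(I*(I*(I*I))) from by rw [hI4e, mul_one], h15']
  have eL : K^7*A = A*(A*(I*(I*(K*(I*(I*I)))))) := by
    simp only [pow_succ, pow_zero, pow_one, one_mul, mul_assoc]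
    rw [hK6', hKA]
    simp only [hIA']
  have eR : A*I*X*K^7*I = A*(A*(I*(I*(K*(I*(I*I)))))) := by
    simp only [pow_succ, pow_zero, pow_one, one_mul, mul_assoc]
    rw [hK6', ← hIX', hXI', hXK']
    simp only [hIA']
  exact eL.trans eR.symm

open FreeMonoid in
/-- K†_{[j,ℓ]}·i_{[j]} ≈_R i_{[j]}·i_{[ℓ]}·X_{[j,ℓ]}·K†_{[j,ℓ]}·i_{[ℓ]},
where K†_{[j,ℓ]} abbreviates the word K_{[j,ℓ]}⁷. -/
theorem stmt_16 (n : ℕ) (j ℓ : ℕ) (hjl : j < ℓ) (hl : ℓ < n) :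
    conGen (GRel n)
      (of (Gen.kgen j ℓ hjl hl) ^ 7 * of (Gen.igen j (hjl.trans hl)))
      (of (Gen.igen j (hjl.trans hl)) * of (Gen.igen ℓ hl) * of (Gen.xgen j ℓ hjl hl) *
       of (Gen.kgen j ℓ hjl hl) ^ 7 * of (Gen.igen ℓ hl)) := by
  set c := conGen (GRel n) with hc
  let q : FreeMonoid (Gen n) →* c.Quotient := Con.mk' c
  have qr : ∀ {w v : FreeMonoid (Gen n)}, GRel n w v → q w = q v := fun h =>
    (Con.eq c).mpr (ConGen.Rel.of _ _ h)
  have key := derive_aux (q (of (Gen.igen j (hjl.trans hl)))) (q (of (Gen.igen ℓ hl)))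
    (q (of (Gen.xgen j ℓ hjl hl))) (q (of (Gen.kgen j ℓ hjl hl)))
    (by simpa [_root_.map_pow, _root_.map_one] using qr (GRel.r1 ℓ hl))
    (by simpa [_root_.map_pow, _root_.map_one] using qr (GRel.r1 j (hjl.trans hl)))
    (by simpa [_root_.map_pow, _root_.map_one] using qr (GRel.r2 j ℓ hjl hl))
    (by simpa [_root_.map_mul] using qr (GRel.r10 j ℓ hjl hl))
    (by simpa [_root_.map_mul, _root_.map_pow] using qr (GRel.r13 j ℓ hjl hl))
    (by simpa [_root_.map_mul] using qr (GRel.r15 j ℓ hjl hl))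
    (by simpa [_root_.map_mul, _root_.map_pow, _root_.map_one] using qr (GRel.r16 j ℓ hjl hl))
    (by simpa [_root_.map_mul] using qr (GRel.r4 j ℓ (hjl.trans hl) hl hjl.ne))
  rw [← Con.eq c]
  exact key

end
end

section
/- For all pairwise distinct indices j, j', ℓ, ℓ' in {0,…,n−1} with j < j', j < ℓ, ℓ < ℓ', j' < ℓ', and ℓ < j', the following relational equivalence is a consequence of R: K†_{[ℓ,ℓ']}·K†_{[j,j']}·K†_{[j',ℓ']}·K†_{[j,ℓ]}·X_{[ℓ,j']} ≈_R X_{[ℓ,j']}·K†_{[ℓ,ℓ']}·K†_{[j,j']}·K†_{[j',ℓ']}·K†_{[j,ℓ]}, where K†_{[a,b]} abbreviates the word K_{[a,b]}⁷. -/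
open Matrix

noncomputable section

/-- Auxiliary monoid computation for statement 18. -/
theorem stmt18_monoid {M : Type*} [Monoid M] (a b cc d x : M)
    (hx : x * x = 1)
    (hcx : cc * x = x * a) (hbx : b * x = x * d)
    (hdc : d * cc = cc * d) (hba : b * a = a * b)
    (h17 : d * cc * b * a = b * a * d * cc) :
    a ^ 7 * b ^ 7 * cc ^ 7 * d ^ 7 * x = x * a ^ 7 * b ^ 7 * cc ^ 7 * d ^ 7 := by
  have swap : ∀ p q : M, p * x = x * q → q * x = x * p := by
    intro p q h
    have h1 : x * (q * x) = p := by rw [← mul_assoc, ← h, mul_assoc, hx, mul_one]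
    calc q * x = x * (x * (q * x)) := by rw [← mul_assoc, hx, one_mul]
    _ = x * p := by rw [h1]
  have hpow : ∀ p q : M, p * x = x * q → ∀ k : ℕ, p ^ k * x = x * q ^ k := by
    intro p q h k
    induction k with
    | zero => rw [pow_zero, pow_zero, one_mul, mul_one]
    | succ k ih =>
      calc p ^ (k + 1) * x = p ^ k * (p * x) := by rw [pow_succ, mul_assoc]
      _ = p ^ k * x * q := by rw [h, ← mul_assoc]
      _ = x * q ^ (k + 1) := by rw [ih, mul_assoc, ← pow_succ]
  have step : ∀ (p q t : M), p * x = x * q → p * (x * t) = x * (q * t) :=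
    fun p q t h => by rw [← mul_assoc, h, mul_assoc]
  have ha7 := hpow a cc (swap cc a hcx) 7
  have hb7 := hpow b d hbx 7
  have hc7 := hpow cc a hcx 7
  have hd7 := hpow d b (swap b d hbx) 7
  have hcd : Commute cc d := hdc.symm
  have hab : Commute a b := hba.symm
  have hMN : Commute (cc * d) (a * b) := by
    show (cc * d) * (a * b) = (a * b) * (cc * d)
    rw [← hdc, ← hba]
    simp only [← mul_assoc]
    exact h17
  have final : cc ^ 7 * d ^ 7 * (a ^ 7 * b ^ 7) = a ^ 7 * b ^ 7 * (cc ^ 7 * d ^ 7) := by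
    rw [← hcd.mul_pow, ← hab.mul_pow]
    exact (hMN.pow_pow 7 7).eq
  simp only [mul_assoc]
  rw [hd7, step _ _ _ hc7, step _ _ _ hb7, step _ _ _ ha7]
  congr 1
  simp only [← mul_assoc]
  simp only [← mul_assoc] at final
  exact final

open FreeMonoid in
/-- for j < ℓ < j' < ℓ' < n,
K†_{[ℓ,ℓ']}·K†_{[j,j']}·K†_{[j',ℓ']}·K†_{[j,ℓ]}·X_{[ℓ,j']}
  ≈_R X_{[ℓ,j']}·K†_{[ℓ,ℓ']}·K†_{[j,j']}·K†_{[j',ℓ']}·K†_{[j,ℓ]},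
where K†_{[a,b]} abbreviates the word K_{[a,b]}⁷. -/
theorem stmt_18 (n : ℕ) (j ℓ j' ℓ' : ℕ)
    (h1 : j < ℓ) (h2 : ℓ < j') (h3 : j' < ℓ') (h4 : ℓ' < n) :
    conGen (GRel n)
      (of (Gen.kgen ℓ ℓ' (h2.trans h3) h4) ^ 7 *
       of (Gen.kgen j j' (h1.trans h2) (h3.trans h4)) ^ 7 *
       of (Gen.kgen j' ℓ' h3 h4) ^ 7 *
       of (Gen.kgen j ℓ h1 ((h2.trans h3).trans h4)) ^ 7 *
       of (Gen.xgen ℓ j' h2 (h3.trans h4)))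
      (of (Gen.xgen ℓ j' h2 (h3.trans h4)) *
       of (Gen.kgen ℓ ℓ' (h2.trans h3) h4) ^ 7 *
       of (Gen.kgen j j' (h1.trans h2) (h3.trans h4)) ^ 7 *
       of (Gen.kgen j' ℓ' h3 h4) ^ 7 *
       of (Gen.kgen j ℓ h1 ((h2.trans h3).trans h4)) ^ 7) := by
  apply (Con.eq _).mp
  have key : ∀ {u v : FreeMonoid (Gen n)}, GRel n u v →
      ((u : (conGen (GRel n)).Quotient) = v) :=
    fun h => (Con.eq _).mpr (ConGen.Rel.of _ _ h)
  have coe_pow : ∀ (w : FreeMonoid (Gen n)) (k : ℕ),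
      ((w ^ k : FreeMonoid (Gen n)) : (conGen (GRel n)).Quotient) = (w : (conGen (GRel n)).Quotient) ^ k := by
    intro w k
    induction k with
    | zero => rw [pow_zero, pow_zero, Con.coe_one]
    | succ k ih => rw [pow_succ, pow_succ, Con.coe_mul, ih]
  simp only [Con.coe_mul, coe_pow]
  apply stmt18_monoid
  · have h := key (GRel.r2 ℓ j' h2 (h3.trans h4))
    rw [pow_two, Con.coe_mul, Con.coe_one] at h
    exact h
  · have h := key (GRel.r12 ℓ j' ℓ' h2 h3 h4)
    rw [Con.coe_mul, Con.coe_mul] at h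
    exact h
  · have h := key (GRel.r12' j ℓ j' h1 h2 (h3.trans h4))
    rw [Con.coe_mul, Con.coe_mul] at h
    exact h
  · have h := key (GRel.r9 j ℓ j' ℓ' h1 ((h2.trans h3).trans h4) h3 h4
      (h1.trans h2).ne ((h1.trans h2).trans h3).ne h2.ne (h2.trans h3).ne)
    rw [Con.coe_mul, Con.coe_mul] at h
    exact h
  · have h := key (GRel.r9 j j' ℓ ℓ' (h1.trans h2) (h3.trans h4) (h2.trans h3) h4
      h1.ne (h1.trans (h2.trans h3)).ne h2.ne' h3.ne)
    rw [Con.coe_mul, Con.coe_mul] at h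
    exact h
  · have h := key (GRel.r17 j ℓ j' ℓ' h1 h3 (h1.trans h2) (h2.trans h3) h4 h2.ne)
    simp only [Con.coe_mul] at h
    exact h


end
end

section
/- Let j, k, ℓ, m ∈ {0,…,n−1} be pairwise distinct indices with j < k, ℓ < m, j < ℓ, and k < m. Then the following identity holds between products of n×n two-level matrices: K_{[j,k]}·K_{[ℓ,m]}·K_{[j,ℓ]}·K_{[k,m]} = K_{[j,ℓ]}·K_{[k,m]}·K_{[j,k]}·K_{[ℓ,m]}. -/
open Matrix

noncomputable section

/-- Auxiliary: a four-level matrix. -/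
def fourLevel (n : ℕ) (M : Matrix (Fin 4) (Fin 4) ℂ) (j k l m : Fin n) :
    Matrix (Fin n) (Fin n) ℂ :=
  fun a b =>
    if a = j then (if b = j then M 0 0 else if b = k then M 0 1 else if b = l then M 0 2 else if b = m then M 0 3 else 0)
    else if a = k then (if b = j then M 1 0 else if b = k then M 1 1 else if b = l then M 1 2 else if b = m then M 1 3 else 0)
    else if a = l then (if b = j then M 2 0 else if b = k then M 2 1 else if b = l then M 2 2 else if b = m then M 2 3 else 0)
    else if a = m then (if b = j then M 3 0 else if b = k then M 3 1 else if b = l then M 3 2 else if b = m then M 3 3 else 0)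
    else if a = b then 1 else 0

lemma sum4 {n : ℕ} (j k l m : Fin n)
    (hjk : j ≠ k) (hjl : j ≠ l) (hjm : j ≠ m) (hkl : k ≠ l) (hkm : k ≠ m) (hlm : l ≠ m)
    (g : Fin n → ℂ) (hg : ∀ c, c ≠ j → c ≠ k → c ≠ l → c ≠ m → g c = 0) :
    ∑ c, g c = g j + g k + g l + g m := by
  have hsub : ({j, k, l, m} : Finset (Fin n)) ⊆ Finset.univ := Finset.subset_univ _
  rw [← Finset.sum_subset hsub (fun x _ hx => by
    simp only [Finset.mem_insert, Finset.mem_singleton, not_or] at hx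
    exact hg x hx.1 hx.2.1 hx.2.2.1 hx.2.2.2)]
  rw [Finset.sum_insert (by simp [hjk, hjl, hjm]), Finset.sum_insert (by simp [hkl, hkm]),
    Finset.sum_insert (by simp [hlm]), Finset.sum_singleton]
  ring

set_option maxHeartbeats 2000000 in
lemma fourLevel_mul (n : ℕ) (M M' : Matrix (Fin 4) (Fin 4) ℂ) (j k l m : Fin n)
    (hjk : j ≠ k) (hjl : j ≠ l) (hjm : j ≠ m) (hkl : k ≠ l) (hkm : k ≠ m) (hlm : l ≠ m) :
    fourLevel n M j k l m * fourLevel n M' j k l m = fourLevel n (M * M') j k l m := by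
  ext a b
  rw [Matrix.mul_apply]
  by_cases hin : a = j ∨ a = k ∨ a = l ∨ a = m
  · rw [sum4 j k l m hjk hjl hjm hkl hkm hlm _
      (fun c h1 h2 h3 h4 => by
        rcases hin with h | h | h | h <;>
          simp [fourLevel, h, h1, h2, h3, h4, hjk, hjl, hjm, hkl, hkm, hlm,
            hjk.symm, hjl.symm, hjm.symm, hkl.symm, hkm.symm, hlm.symm])]
    rcases hin with h | h | h | h <;>
      simp [fourLevel, Matrix.mul_apply, Fin.sum_univ_four, h,
        hjk, hjl, hjm, hkl, hkm, hlm,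
        hjk.symm, hjl.symm, hjm.symm, hkl.symm, hkm.symm, hlm.symm] <;>
      split_ifs <;> ring
  · push_neg at hin
    obtain ⟨h1, h2, h3, h4⟩ := hin
    rw [Finset.sum_eq_single a
      (fun x _ hx => by simp [fourLevel, h1, h2, h3, h4, (Ne.symm hx)])
      (by simp)]
    simp [fourLevel, h1, h2, h3, h4]

def E01 (U : Matrix (Fin 2) (Fin 2) ℂ) : Matrix (Fin 4) (Fin 4) ℂ :=
  !![U 0 0, U 0 1, 0, 0; U 1 0, U 1 1, 0, 0; 0, 0, 1, 0; 0, 0, 0, 1]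
def E23 (U : Matrix (Fin 2) (Fin 2) ℂ) : Matrix (Fin 4) (Fin 4) ℂ :=
  !![1, 0, 0, 0; 0, 1, 0, 0; 0, 0, U 0 0, U 0 1; 0, 0, U 1 0, U 1 1]
def E02 (U : Matrix (Fin 2) (Fin 2) ℂ) : Matrix (Fin 4) (Fin 4) ℂ :=
  !![U 0 0, 0, U 0 1, 0; 0, 1, 0, 0; U 1 0, 0, U 1 1, 0; 0, 0, 0, 1]
def E13 (U : Matrix (Fin 2) (Fin 2) ℂ) : Matrix (Fin 4) (Fin 4) ℂ :=
  !![1, 0, 0, 0; 0, U 0 0, 0, U 0 1; 0, 0, 1, 0; 0, U 1 0, 0, U 1 1]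

set_option maxHeartbeats 2000000 in
lemma twoLevel_E01 (n : ℕ) (U : Matrix (Fin 2) (Fin 2) ℂ) (j k l m : Fin n)
    (hjk : j ≠ k) (hjl : j ≠ l) (hjm : j ≠ m) (hkl : k ≠ l) (hkm : k ≠ m) (hlm : l ≠ m) :
    twoLevel n U j k = fourLevel n (E01 U) j k l m := by
  ext a b
  simp only [twoLevel, fourLevel, E01]
  split_ifs <;> simp_all [Matrix.vecHead, Matrix.vecTail]

set_option maxHeartbeats 2000000 in
lemma twoLevel_E23 (n : ℕ) (U : Matrix (Fin 2) (Fin 2) ℂ) (j k l m : Fin n)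
    (hjk : j ≠ k) (hjl : j ≠ l) (hjm : j ≠ m) (hkl : k ≠ l) (hkm : k ≠ m) (hlm : l ≠ m) :
    twoLevel n U l m = fourLevel n (E23 U) j k l m := by
  ext a b
  simp only [twoLevel, fourLevel, E23]
  split_ifs <;> simp_all [Matrix.vecHead, Matrix.vecTail]

set_option maxHeartbeats 2000000 in
lemma twoLevel_E02 (n : ℕ) (U : Matrix (Fin 2) (Fin 2) ℂ) (j k l m : Fin n)
    (hjk : j ≠ k) (hjl : j ≠ l) (hjm : j ≠ m) (hkl : k ≠ l) (hkm : k ≠ m) (hlm : l ≠ m) :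
    twoLevel n U j l = fourLevel n (E02 U) j k l m := by
  ext a b
  simp only [twoLevel, fourLevel, E02]
  split_ifs <;> simp_all [Matrix.vecHead, Matrix.vecTail]

set_option maxHeartbeats 2000000 in
lemma twoLevel_E13 (n : ℕ) (U : Matrix (Fin 2) (Fin 2) ℂ) (j k l m : Fin n)
    (hjk : j ≠ k) (hjl : j ≠ l) (hjm : j ≠ m) (hkl : k ≠ l) (hkm : k ≠ m) (hlm : l ≠ m) :
    twoLevel n U k m = fourLevel n (E13 U) j k l m := by
  ext a b
  simp only [twoLevel, fourLevel, E13]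
  split_ifs <;> simp_all [Matrix.vecHead, Matrix.vecTail]

set_option maxHeartbeats 2000000 in
lemma key_relation (U : Matrix (Fin 2) (Fin 2) ℂ) :
    E01 U * E23 U * E02 U * E13 U = E02 U * E13 U * E01 U * E23 U := by
  ext i j
  fin_cases i <;> fin_cases j <;>
    simp [E01, E23, E02, E13, Matrix.mul_apply, Fin.sum_univ_four, Matrix.vecHead, Matrix.vecTail] <;> ring


/-- relation (17) as a matrix identity: for pairwise distinct
j < k, ℓ < m with j < ℓ and k < m,
K_{[j,k]}·K_{[ℓ,m]}·K_{[j,ℓ]}·K_{[k,m]} = K_{[j,ℓ]}·K_{[k,m]}·K_{[j,k]}·K_{[ℓ,m]}. -/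
theorem stmt_19 (n : ℕ) (j k ℓ m : Fin n)
    (hjk : j < k) (hlm : ℓ < m) (hjl : j < ℓ) (hkm : k < m) (hkl : k ≠ ℓ) :
    twoLevel n Kmat j k * twoLevel n Kmat ℓ m * twoLevel n Kmat j ℓ * twoLevel n Kmat k m =
    twoLevel n Kmat j ℓ * twoLevel n Kmat k m * twoLevel n Kmat j k * twoLevel n Kmat ℓ m := by
  have d1 : j ≠ k := hjk.ne
  have d2 : j ≠ ℓ := hjl.ne
  have d3 : j ≠ m := (hjl.trans hlm).ne
  have d4 : k ≠ ℓ := hkl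
  have d5 : k ≠ m := hkm.ne
  have d6 : ℓ ≠ m := hlm.ne
  rw [twoLevel_E01 n Kmat j k ℓ m d1 d2 d3 d4 d5 d6,
      twoLevel_E23 n Kmat j k ℓ m d1 d2 d3 d4 d5 d6,
      twoLevel_E02 n Kmat j k ℓ m d1 d2 d3 d4 d5 d6,
      twoLevel_E13 n Kmat j k ℓ m d1 d2 d3 d4 d5 d6,
      fourLevel_mul n _ _ j k ℓ m d1 d2 d3 d4 d5 d6,
      fourLevel_mul n _ _ j k ℓ m d1 d2 d3 d4 d5 d6,
      fourLevel_mul n _ _ j k ℓ m d1 d2 d3 d4 d5 d6,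
      fourLevel_mul n _ _ j k ℓ m d1 d2 d3 d4 d5 d6,
      fourLevel_mul n _ _ j k ℓ m d1 d2 d3 d4 d5 d6,
      fourLevel_mul n _ _ j k ℓ m d1 d2 d3 d4 d5 d6,
      key_relation]

end
end
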